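/- Let a < b be real numbers and β > 3/2. For n ∈ ℕ set r_j^n = a + (j/n)(b − a) for j = 0, 1, …, n. Then lim_{n→∞} Σ_{j=0}^{n−1} (∫_a^{r_j^n} (√(r_{j+1}^n − r) − √(r_j^n − r))^β dr)^{2/3} = 0. -/

import Mathlib

open MeasureTheory Real Filter

set_option maxHeartbeats 1000000

lemma sqrt_diff_le_aux (y δ : ℝ) (hy : 0 ≤ y) (hδ : 0 < δ) :
    Real.sqrt (y + δ) - Real.sqrt y ≤ δ / Real.sqrt (y + δ) := by
  have hx : 0 < y + δ := by linarith
  have hs : 0 < Real.sqrt (y + δ) := Real.sqrt_pos.2 hx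
  rw [le_div_iff₀ hs]
  have h1 : Real.sqrt y * Real.sqrt y = y := Real.mul_self_sqrt hy
  have h2 : Real.sqrt (y + δ) * Real.sqrt (y + δ) = y + δ := Real.mul_self_sqrt hx.le
  have h3 : Real.sqrt y ≤ Real.sqrt (y + δ) := Real.sqrt_le_sqrt (by linarith)
  nlinarith [Real.sqrt_nonneg y]

theorem stmt14 (a b β : ℝ) (hab : a < b) (hβ : 3/2 < β) :
    Tendsto (fun n : ℕ =>
        ∑ j ∈ Finset.range n,
          (∫ r in a..(a + (j : ℝ) / n * (b - a)),
              (Real.sqrt ((a + ((j : ℝ) + 1) / n * (b - a)) - r)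
                - Real.sqrt ((a + (j : ℝ) / n * (b - a)) - r)) ^ β) ^ ((2:ℝ)/3))
      atTop (nhds 0) := by
  have hL : (0:ℝ) < b - a := sub_pos.2 hab
  have hβ0 : (0:ℝ) < β := by linarith
  set γ : ℝ := min (β/2) (7/8) with hγdef
  have hγ0 : 0 ≤ γ := le_min (by positivity) (by norm_num)
  have hγ1 : γ < 1 := lt_of_le_of_lt (min_le_right _ _) (by norm_num)
  set α : ℝ := 1/2 - γ/β with hαdef
  have hα0 : 0 ≤ α := by
    have h : γ ≤ β/2 := min_le_left _ _
    have h2 : γ/β ≤ 1/2 := by rw [div_le_iff₀ hβ0]; linarith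
    simp only [hαdef]; linarith
  have hαβ : (1-α)*β = β/2 + γ := by
    rw [hαdef]; field_simp; ring
  set ρ : ℝ := (1-α)*β with hρdef
  have hρ32 : 3/2 < ρ := by
    rw [hαβ]
    rcases le_total (β/2) (7/8) with h | h
    · have hγe : γ = β/2 := min_eq_left h
      rw [hγe]; linarith
    · have hγe : γ = 7/8 := min_eq_right h
      rw [hγe]; linarith
  set C : ℝ := (b-a)^(1-γ) / (1-γ) with hC
  have hC0 : 0 ≤ C := by
    apply div_nonneg (Real.rpow_nonneg hL.le _) (by linarith)
  -- key integral bound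
  have key : ∀ n : ℕ, 1 ≤ n → ∀ j ∈ Finset.range n,
      (∫ r in a..(a + (j : ℝ) / n * (b - a)),
          (Real.sqrt ((a + ((j : ℝ) + 1) / n * (b - a)) - r)
            - Real.sqrt ((a + (j : ℝ) / n * (b - a)) - r)) ^ β)
        ≤ C * ((b-a)/n)^ρ := by
    intro n hn j hj
    have hn0 : (0:ℝ) < n := by exact_mod_cast hn
    set δ : ℝ := (b-a)/n with hδdef
    have hδ : 0 < δ := by positivity
    set rj : ℝ := a + (j:ℝ)/n*(b-a) with hrjdef
    set rj1 : ℝ := a + ((j:ℝ)+1)/n*(b-a) with hrj1def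
    have hrj1 : rj1 = rj + δ := by
      rw [hrjdef, hrj1def, hδdef]; field_simp; ring
    have harj : a ≤ rj := by
      rw [hrjdef]
      have : 0 ≤ (j:ℝ)/n*(b-a) := by positivity
      linarith
    have hjn : ((j:ℝ)+1) ≤ n := by
      have := Finset.mem_range.1 hj
      exact_mod_cast Nat.succ_le_of_lt this
    have hrj1b : rj1 ≤ b := by
      rw [hrj1def]
      have h1 : ((j:ℝ)+1)/n ≤ 1 := by
        rw [div_le_one hn0]; exact hjn
      nlinarith
    -- pointwise bound
    have hpt : ∀ r ∈ Set.Icc a rj,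
        (Real.sqrt (rj1 - r) - Real.sqrt (rj - r)) ^ β ≤ δ^ρ * (rj1 - r)^(-γ) := by
      intro r hr
      have hy : 0 ≤ rj - r := by linarith [hr.2]
      have hx : δ ≤ rj1 - r := by rw [hrj1]; linarith
      have hx0 : 0 < rj1 - r := lt_of_lt_of_le hδ hx
      have hsx : 0 < Real.sqrt (rj1 - r) := Real.sqrt_pos.2 hx0
      have d1 : Real.sqrt (rj1 - r) - Real.sqrt (rj - r) ≤ δ / Real.sqrt (rj1 - r) := by
        have := sqrt_diff_le_aux (rj - r) δ hy hδ
        have he : rj - r + δ = rj1 - r := by rw [hrj1]; ring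
        rwa [he] at this
      have d2 : δ / Real.sqrt (rj1 - r) ≤ δ^(1-α) * (rj1 - r)^(α - 1/2) := by
        have e1 : δ / Real.sqrt (rj1 - r) = δ * (rj1 - r)^(-(1/2:ℝ)) := by
          rw [Real.sqrt_eq_rpow, Real.rpow_neg hx0.le, div_eq_mul_inv]
        rw [e1]
        have e2 : δ = δ^(1-α) * δ^α := by
          rw [← Real.rpow_add hδ]; norm_num
        calc δ * (rj1 - r)^(-(1/2:ℝ)) = δ^(1-α) * δ^α * (rj1 - r)^(-(1/2:ℝ)) := by rw [← e2]
          _ ≤ δ^(1-α) * (rj1 - r)^α * (rj1 - r)^(-(1/2:ℝ)) := by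
              apply mul_le_mul_of_nonneg_right _ (Real.rpow_nonneg hx0.le _)
              exact mul_le_mul_of_nonneg_left (Real.rpow_le_rpow hδ.le hx hα0)
                (Real.rpow_nonneg hδ.le _)
          _ = δ^(1-α) * (rj1 - r)^(α - 1/2) := by
              rw [mul_assoc, ← Real.rpow_add hx0, ← sub_eq_add_neg]
      have hbase0 : 0 ≤ Real.sqrt (rj1 - r) - Real.sqrt (rj - r) := by
        have : Real.sqrt (rj - r) ≤ Real.sqrt (rj1 - r) :=
          Real.sqrt_le_sqrt (by rw [hrj1]; linarith)
        linarith
      have d3 : (Real.sqrt (rj1 - r) - Real.sqrt (rj - r)) ^ β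
          ≤ (δ^(1-α) * (rj1 - r)^(α - 1/2)) ^ β :=
        Real.rpow_le_rpow hbase0 (d1.trans d2) hβ0.le
      refine d3.trans (le_of_eq ?_)
      rw [Real.mul_rpow (Real.rpow_nonneg hδ.le _) (Real.rpow_nonneg hx0.le _),
        ← Real.rpow_mul hδ.le, ← Real.rpow_mul hx0.le]
      have hexp : (α - 1/2)*β = -γ := by
        rw [hαdef]
        have h10 : (1/2 - γ/β - 1/2 : ℝ) = -(γ/β) := by ring
        rw [h10, neg_mul, div_mul_cancel₀ _ (ne_of_gt hβ0)]
      rw [hexp, hρdef]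
    -- integrability
    have hfc : ContinuousOn
        (fun r => (Real.sqrt (rj1 - r) - Real.sqrt (rj - r)) ^ β) (Set.Icc a rj) := by
      apply ContinuousOn.rpow_const
      · exact (((Real.continuous_sqrt.comp (continuous_const.sub continuous_id)).sub
          (Real.continuous_sqrt.comp (continuous_const.sub continuous_id)))).continuousOn
      · intro x _; exact Or.inr hβ0.le
    have hgc : ContinuousOn (fun r => δ^ρ * (rj1 - r)^(-γ)) (Set.Icc a rj) := by
      apply ContinuousOn.mul continuousOn_const
      apply ContinuousOn.rpow_const (continuous_const.sub continuous_id).continuousOn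
      intro x hx
      left
      have h9 : δ ≤ rj1 - x := by rw [hrj1]; linarith [hx.2]
      exact ne_of_gt (lt_of_lt_of_le hδ h9)
    have hmono := intervalIntegral.integral_mono_on (μ := volume) harj
      (hfc.intervalIntegrable_of_Icc harj) (hgc.intervalIntegrable_of_Icc harj) hpt
    refine hmono.trans ?_
    -- compute the g-integral
    rw [intervalIntegral.integral_const_mul]
    have h4 : (∫ r in a..rj, (rj1 - r)^(-γ)) = ∫ u in (rj1 - rj)..(rj1 - a), u^(-γ) :=
      intervalIntegral.integral_comp_sub_left (fun u => u^(-γ)) rj1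
    have h5 : (∫ u in (rj1 - rj)..(rj1 - a), u^(-γ))
        = ((rj1 - a)^(1-γ) - (rj1 - rj)^(1-γ)) / (1-γ) := by
      rw [integral_rpow (Or.inl (by linarith : (-1:ℝ) < -γ))]
      rw [show -γ+1 = 1-γ from by ring]
    have h6 : ((rj1 - a)^(1-γ) - (rj1 - rj)^(1-γ)) / (1-γ) ≤ C := by
      rw [hC]
      have hnum : (rj1 - a)^(1-γ) - (rj1 - rj)^(1-γ) ≤ (b-a)^(1-γ) := by
        have h7 : (rj1 - a)^(1-γ) ≤ (b-a)^(1-γ) := by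
          apply Real.rpow_le_rpow _ (by linarith) (by linarith)
          have : 0 ≤ ((j:ℝ)+1)/n*(b-a) := by positivity
          rw [hrj1def]; linarith
        have h8 : 0 ≤ (rj1 - rj)^(1-γ) := Real.rpow_nonneg (by rw [hrj1]; linarith) _
        linarith
      exact (div_le_div_iff_of_pos_right (by linarith)).2 hnum
    calc δ^ρ * (∫ r in a..rj, (rj1 - r)^(-γ)) ≤ δ^ρ * C := by
          rw [h4, h5] at *
          exact mul_le_mul_of_nonneg_left h6 (Real.rpow_nonneg hδ.le _)
      _ = C * ((b-a)/n)^ρ := by rw [mul_comm, hδdef]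
  -- sum bound and squeeze
  have hsum : ∀ n : ℕ, 1 ≤ n →
      (∑ j ∈ Finset.range n,
          (∫ r in a..(a + (j : ℝ) / n * (b - a)),
              (Real.sqrt ((a + ((j : ℝ) + 1) / n * (b - a)) - r)
                - Real.sqrt ((a + (j : ℝ) / n * (b - a)) - r)) ^ β) ^ ((2:ℝ)/3))
        ≤ (n : ℝ) * (C * ((b-a)/n)^ρ)^((2:ℝ)/3) := by
    intro n hn
    have hn0 : (0:ℝ) < n := by exact_mod_cast hn
    have : ∀ j ∈ Finset.range n,
        (∫ r in a..(a + (j : ℝ) / n * (b - a)),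
            (Real.sqrt ((a + ((j : ℝ) + 1) / n * (b - a)) - r)
              - Real.sqrt ((a + (j : ℝ) / n * (b - a)) - r)) ^ β) ^ ((2:ℝ)/3)
          ≤ (C * ((b-a)/n)^ρ)^((2:ℝ)/3) := by
      intro j hj
      apply Real.rpow_le_rpow _ (key n hn j hj) (by norm_num)
      apply intervalIntegral.integral_nonneg
      · have : 0 ≤ (j:ℝ)/n*(b-a) := by positivity
        linarith
      · intro r _
        apply Real.rpow_nonneg
        have : Real.sqrt ((a + (j:ℝ)/n*(b-a)) - r) ≤
            Real.sqrt ((a + ((j:ℝ)+1)/n*(b-a)) - r) := by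
          apply Real.sqrt_le_sqrt
          have : (j:ℝ)/n*(b-a) ≤ ((j:ℝ)+1)/n*(b-a) := by
            apply mul_le_mul_of_nonneg_right _ hL.le
            exact (div_le_div_iff_of_pos_right hn0).2 (by linarith)
          linarith
        linarith
    calc _ ≤ ∑ _j ∈ Finset.range n, (C * ((b-a)/n)^ρ)^((2:ℝ)/3) := Finset.sum_le_sum this
      _ = (n : ℝ) * (C * ((b-a)/n)^ρ)^((2:ℝ)/3) := by
          rw [Finset.sum_const, Finset.card_range, nsmul_eq_mul]
  -- the upper bound tends to 0
  set K : ℝ := (C * (b-a)^ρ)^((2:ℝ)/3) with hK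
  have hupper_eq : ∀ n : ℕ, 1 ≤ n →
      (n : ℝ) * (C * ((b-a)/n)^ρ)^((2:ℝ)/3) = K * (n : ℝ)^(1 - 2*ρ/3) := by
    intro n hn
    have hn0 : (0:ℝ) < n := by exact_mod_cast hn
    have e1 : C * ((b-a)/(n:ℝ))^ρ = (C*(b-a)^ρ) * ((n:ℝ)^(-ρ)) := by
      rw [Real.div_rpow hL.le hn0.le, Real.rpow_neg hn0.le]; ring
    have e3 : (n:ℝ)^(1-2*ρ/3) = (n:ℝ) * (n:ℝ)^(-ρ*((2:ℝ)/3)) := by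
      rw [show (1-2*ρ/3 : ℝ) = 1 + (-ρ*((2:ℝ)/3)) by ring, Real.rpow_add hn0, Real.rpow_one]
    rw [e1, Real.mul_rpow (by positivity) (Real.rpow_nonneg hn0.le _),
      ← Real.rpow_mul hn0.le, hK, e3]
    ring
  have hKlim : Tendsto (fun n : ℕ => K * (n : ℝ)^(1 - 2*ρ/3)) atTop (nhds 0) := by
    have h1 : Tendsto (fun x : ℝ => x ^ (-(2*ρ/3 - 1))) atTop (nhds 0) :=
      tendsto_rpow_neg_atTop (by linarith)
    have h2 : Tendsto (fun n : ℕ => ((n:ℝ)) ^ (1 - 2*ρ/3)) atTop (nhds 0) := by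
      have := h1.comp tendsto_natCast_atTop_atTop (α := ℕ)
      simpa [neg_sub, Function.comp_def] using this
    simpa using h2.const_mul K
  have hnonneg : ∀ n : ℕ, 1 ≤ n → 0 ≤
      ∑ j ∈ Finset.range n,
        (∫ r in a..(a + (j : ℝ) / n * (b - a)),
            (Real.sqrt ((a + ((j : ℝ) + 1) / n * (b - a)) - r)
              - Real.sqrt ((a + (j : ℝ) / n * (b - a)) - r)) ^ β) ^ ((2:ℝ)/3) := by
    intro n hn
    have hn0 : (0:ℝ) < n := by exact_mod_cast hn
    apply Finset.sum_nonneg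
    intro j _
    apply Real.rpow_nonneg
    apply intervalIntegral.integral_nonneg
    · have : 0 ≤ (j:ℝ)/n*(b-a) := by positivity
      linarith
    · intro r _
      apply Real.rpow_nonneg
      have h11 : Real.sqrt ((a + (j:ℝ)/n*(b-a)) - r) ≤
          Real.sqrt ((a + ((j:ℝ)+1)/n*(b-a)) - r) := by
        apply Real.sqrt_le_sqrt
        have : (j:ℝ)/n*(b-a) ≤ ((j:ℝ)+1)/n*(b-a) := by
          apply mul_le_mul_of_nonneg_right _ hL.le
          exact (div_le_div_iff_of_pos_right hn0).2 (by linarith)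
        linarith
      linarith
  refine squeeze_zero' ?_ ?_ hKlim
  · filter_upwards [eventually_ge_atTop 1] with n hn
    exact hnonneg n hn
  · filter_upwards [eventually_ge_atTop 1] with n hn
    exact (hsum n hn).trans (le_of_eq (hupper_eq n hn))
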